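/- arXiv:astro-ph/0501541 — 2 statements merged into one kernel-verified Lean document; each statement's English description precedes it below -/
import Mathlib

section
/- Let Ψ be obtained from Φ by reduction. If f₀ ∈ F_M minimizes the energy-Casimir functional H_C on F_M, then its induced spatial density ρ_{f₀} belongs to R_M and minimizes the reduced functional H_r on R_M. -/
open MeasureTheory Filter Topology Set ENNReal

noncomputable section

/-- Physical space `ℝ³`. -/
abbrev R3 : Type := EuclideanSpace ℝ (Fin 3)

/-- Spatial density `ρ_f(x) = ∫ f(x,v) dv` induced by a phase-space density. -/
def spatialDensity (f : R3 × R3 → ℝ) (x : R3) : ℝ := ∫ v, f (x, v)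

/-- Kinetic energy `E_kin(f) = (1/2)∫∫ |v|² f dv dx`. -/
def Ekin (f : R3 × R3 → ℝ) : ℝ := (1/2) * ∫ p : R3 × R3, ‖p.2‖ ^ 2 * f p

/-- `D(σ) = ∫∫ σ(x)σ(y)/|x-y| dx dy`. -/
def Dpair (σ : R3 → ℝ) : ℝ := ∫ x, ∫ y, σ x * σ y / ‖x - y‖

/-- Potential energy `E_pot(ρ) = -(1/2)∫∫ ρ(x)ρ(y)/|x-y| dx dy`. -/
def Epot (ρ : R3 → ℝ) : ℝ := -(1/2) * Dpair ρ

/-- Casimir functional `C(f) = ∫∫ Φ(f) dv dx`. -/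
def Casimir (Φ : ℝ → ℝ) (f : R3 × R3 → ℝ) : ℝ := ∫ p, Φ (f p)

/-- Energy-Casimir functional `H_C = E_kin + E_pot + C`. -/
def HC (Φ : ℝ → ℝ) (f : R3 × R3 → ℝ) : ℝ :=
  Ekin f + Epot (spatialDensity f) + Casimir Φ f

/-- Membership in the constraint set `F_M`. -/
structure MemFM (Φ : ℝ → ℝ) (M : ℝ) (f : R3 × R3 → ℝ) : Prop where
  nonneg : ∀ p, 0 ≤ f p
  integrable : Integrable f
  mass : (∫ p, f p) = M
  kin_int : Integrable (fun p : R3 × R3 => ‖p.2‖ ^ 2 * f p)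
  cas_int : Integrable (fun p => Φ (f p))

/-- The constraint set `F_M`. -/
def FMset (Φ : ℝ → ℝ) (M : ℝ) : Set ((R3 × R3) → ℝ) := {f | MemFM Φ M f}

/-- Hypotheses (Φ1)-(Φ3) on the Casimir function `Φ`, with derivative `Φ'`
and growth exponents `k`, `k'`. -/
structure IsPhi (Φ Φ' : ℝ → ℝ) (k k' : ℝ) : Prop where
  zero : Φ 0 = 0
  deriv_zero : Φ' 0 = 0
  hasDeriv : ∀ s ∈ Ici (0:ℝ), HasDerivAt Φ (Φ' s) s
  derivCont : ContinuousOn Φ' (Ici 0)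
  nonneg : ∀ s ∈ Ici (0:ℝ), 0 ≤ Φ s
  sconvex : StrictConvexOn ℝ (Ici 0) Φ
  k_pos : 0 < k
  k_lt : k < 3/2
  k'_pos : 0 < k'
  k'_lt : k' < 3/2
  growth_large : ∃ C > 0, ∃ F₁ > 0, ∀ s, F₁ ≤ s → C * s ^ (1 + 1/k) ≤ Φ s
  growth_small : ∃ C > 0, ∃ F₂ > 0, ∀ s, 0 ≤ s → s ≤ F₂ → Φ s ≤ C * s ^ (1 + 1/k')

/-- Potential `U_ρ(x) = -∫ ρ(y)/|x-y| dy` induced by a spatial density. -/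
def U0rho (ρ : R3 → ℝ) (x : R3) : ℝ := -∫ y, ρ y / ‖x - y‖

/-- Particle energy `E(x,v) = (1/2)|v|² + U₀(x)` for the state `f₀`. -/
def Epart (f₀ : R3 × R3 → ℝ) (p : R3 × R3) : ℝ :=
  (1/2) * ‖p.2‖ ^ 2 + U0rho (spatialDensity f₀) p.1

/-- Reduced density function `Ψ(s)`, obtained from `Φ` by minimizing the sum of kinetic
energy density and Casimir density over all velocity profiles of total mass `s`. -/
def PsiOf (Φ : ℝ → ℝ) (s : ℝ) : ℝ :=
  sInf { r : ℝ | ∃ g : R3 → ℝ, (∀ v, 0 ≤ g v) ∧ Integrable g ∧ (∫ v, g v) = s ∧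
    Integrable (fun v => (1/2) * ‖v‖ ^ 2 * g v + Φ (g v)) ∧
    r = ∫ v, ((1/2) * ‖v‖ ^ 2 * g v + Φ (g v)) }

/-- Reduced functional `H_r(ρ) = ∫ Ψ(ρ) dx + E_pot(ρ)`. -/
def Hr (Ψ : ℝ → ℝ) (ρ : R3 → ℝ) : ℝ := (∫ x, Ψ (ρ x)) + Epot ρ

/-- Membership in the reduced constraint set `R_M`. -/
structure MemRM (Ψ : ℝ → ℝ) (M : ℝ) (ρ : R3 → ℝ) : Prop where
  nonneg : ∀ x, 0 ≤ ρ x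
  integrable : Integrable ρ
  mass : (∫ x, ρ x) = M
  psi_int : Integrable (fun x => Ψ (ρ x))

/-- The reduced constraint set `R_M`. -/
def RMset (Ψ : ℝ → ℝ) (M : ℝ) : Set (R3 → ℝ) := {ρ | MemRM Ψ M ρ}

/-- Hypotheses (Ψ1)-(Ψ3) on `Ψ`, with derivative `Ψ'` and growth exponents `n`, `n'`. -/
structure IsPsi (Ψ Ψ' : ℝ → ℝ) (n n' : ℝ) : Prop where
  zero : Ψ 0 = 0
  deriv_zero : Ψ' 0 = 0
  hasDeriv : ∀ s ∈ Ici (0:ℝ), HasDerivAt Ψ (Ψ' s) s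
  derivCont : ContinuousOn Ψ' (Ici 0)
  nonneg : ∀ s ∈ Ici (0:ℝ), 0 ≤ Ψ s
  sconvex : StrictConvexOn ℝ (Ici 0) Ψ
  n_pos : 0 < n
  n_lt : n < 3
  n'_pos : 0 < n'
  n'_lt : n' < 3
  growth_large : ∃ C > 0, ∃ s₁ > 0, ∀ s, s₁ ≤ s → C * s ^ (1 + 1/n) ≤ Ψ s
  growth_small : ∃ C > 0, ∃ s₂ > 0, ∀ s, 0 ≤ s → s ≤ s₂ → Ψ s ≤ C * s ^ (1 + 1/n')

/-- Relative "distance" `d(f,f₀) = ∫∫ [Φ(f) - Φ(f₀) + E (f - f₀)] dv dx`. -/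
def dVP (Φ : ℝ → ℝ) (f₀ f : R3 × R3 → ℝ) : ℝ :=
  ∫ p, (Φ (f p) - Φ (f₀ p) + Epart f₀ p * (f p - f₀ p))


/-! ### Auxiliary development -/

section AuxVP

variable {Φ Φ' : ℝ → ℝ} {k k' : ℝ}

/-- The admissible set whose infimum defines `PsiOf`. -/
def AdmVP (Φ : ℝ → ℝ) (s : ℝ) : Set ℝ :=
  { r : ℝ | ∃ g : R3 → ℝ, (∀ v, 0 ≤ g v) ∧ Integrable g ∧ (∫ v, g v) = s ∧
    Integrable (fun v => (1/2) * ‖v‖ ^ 2 * g v + Φ (g v)) ∧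
    r = ∫ v, ((1/2) * ‖v‖ ^ 2 * g v + Φ (g v)) }

lemma psiOf_eq_sInf (Φ : ℝ → ℝ) (s : ℝ) : PsiOf Φ s = sInf (AdmVP Φ s) := rfl

lemma IsPhi.mono (hΦ : IsPhi Φ Φ' k k') {a b : ℝ} (ha : 0 ≤ a) (hab : a ≤ b) :
    Φ a ≤ Φ b := by
  rcases eq_or_lt_of_le (ha.trans hab) with hb | hb
  · have h1 : a = 0 := le_antisymm (hab.trans hb.symm.le) ha
    have h2 : b = 0 := hb.symm
    rw [h1, h2]
  · have hbmem : b ∈ Set.Ici (0:ℝ) := Set.mem_Ici.mpr hb.le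
    have h0 : (0:ℝ) ∈ Set.Ici (0:ℝ) := Set.mem_Ici.mpr le_rfl
    have ht0 : 0 ≤ a / b := div_nonneg ha hb.le
    have ht1 : a / b ≤ 1 := div_le_one_of_le₀ hab hb.le
    have := hΦ.sconvex.convexOn.2 h0 hbmem (by linarith : (0:ℝ) ≤ 1 - a/b) ht0 (by ring)
    simp only [smul_eq_mul, mul_zero, zero_add] at this
    have hab' : a / b * b = a := div_mul_cancel₀ a hb.ne'
    rw [hab'] at this
    have hΦb : 0 ≤ Φ b := hΦ.nonneg b hbmem
    calc Φ a ≤ (1 - a/b) * Φ 0 + a/b * Φ b := this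
      _ = a/b * Φ b := by rw [hΦ.zero]; ring
      _ ≤ 1 * Φ b := mul_le_mul_of_nonneg_right ht1 hΦb
      _ = Φ b := one_mul _

lemma IsPhi.scale (hΦ : IsPhi Φ Φ' k k') {c t : ℝ} (hc0 : 0 ≤ c) (hc1 : c ≤ 1)
    (ht : 0 ≤ t) : Φ (c * t) ≤ c * Φ t := by
  have := hΦ.sconvex.convexOn.2 (Set.mem_Ici.mpr le_rfl) (ht : t ∈ Set.Ici 0)
    (by linarith : (0:ℝ) ≤ 1 - c) hc0 (by ring)
  simp only [smul_eq_mul, mul_zero, zero_add] at this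
  calc Φ (c * t) ≤ (1 - c) * Φ 0 + c * Φ t := this
    _ = c * Φ t := by rw [hΦ.zero]; ring

lemma IsPhi.phiM_measurable (hΦ : IsPhi Φ Φ' k k') :
    Measurable (fun s : ℝ => Φ (max s 0)) := by
  apply Monotone.measurable
  intro s t hst
  exact hΦ.mono (le_max_right _ _) (max_le_max hst le_rfl)

lemma IsPhi.comp_aesm (hΦ : IsPhi Φ Φ' k k') {α : Type*} [MeasurableSpace α]
    {μ : Measure α} {g : α → ℝ} (hg0 : ∀ v, 0 ≤ g v) (hg : AEStronglyMeasurable g μ) :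
    AEStronglyMeasurable (fun v => Φ (g v)) μ := by
  have h2 : (fun v => Φ (g v)) = fun v => Φ (max (g v) 0) := by
    funext v; rw [max_eq_left (hg0 v)]
  rw [h2]
  exact (hΦ.phiM_measurable.comp_aemeasurable hg.aemeasurable).aestronglyMeasurable

lemma cost_aesm (hΦ : IsPhi Φ Φ' k k') {g : R3 → ℝ} (hg0 : ∀ v, 0 ≤ g v)
    (hg : AEStronglyMeasurable g (volume : Measure R3)) :
    AEStronglyMeasurable (fun v : R3 => (1/2) * ‖v‖ ^ 2 * g v + Φ (g v))
      (volume : Measure R3) := by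
  have h1 : AEStronglyMeasurable (fun v : R3 => (1/2) * ‖v‖ ^ 2 * g v) volume := by
    exact ((continuous_const.mul ((continuous_norm).pow 2)).aestronglyMeasurable).mul hg
  exact h1.add (hΦ.comp_aesm hg0 hg)

lemma cost_pt_nonneg (hΦ : IsPhi Φ Φ' k k') {g : R3 → ℝ} (hg0 : ∀ v, 0 ≤ g v) (v : R3) :
    0 ≤ (1/2) * ‖v‖ ^ 2 * g v + Φ (g v) := by
  have h1 : 0 ≤ (1/2) * ‖v‖ ^ 2 * g v := by
    have := hg0 v; positivity
  exact add_nonneg h1 (hΦ.nonneg _ (hg0 v))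

lemma admVP_nonneg (hΦ : IsPhi Φ Φ' k k') {s r : ℝ} (hr : r ∈ AdmVP Φ s) : 0 ≤ r := by
  obtain ⟨g, hg0, _, _, _, hr⟩ := hr
  rw [hr]
  exact integral_nonneg (cost_pt_nonneg hΦ hg0)

lemma bddBelow_admVP (hΦ : IsPhi Φ Φ' k k') (s : ℝ) : BddBelow (AdmVP Φ s) :=
  ⟨0, fun _ hr => admVP_nonneg hΦ hr⟩

lemma psiOf_nonneg (hΦ : IsPhi Φ Φ' k k') (s : ℝ) : 0 ≤ PsiOf Φ s :=
  Real.sInf_nonneg (fun _ hr => admVP_nonneg hΦ hr)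

lemma psiOf_le (hΦ : IsPhi Φ Φ' k k') {s r : ℝ} (hr : r ∈ AdmVP Φ s) : PsiOf Φ s ≤ r :=
  csInf_le (bddBelow_admVP hΦ s) hr

lemma zero_mem_admVP (hΦ : IsPhi Φ Φ' k k') : (0:ℝ) ∈ AdmVP Φ 0 := by
  refine ⟨fun _ => 0, fun _ => le_rfl, integrable_zero _ _ _, by simp, ?_, ?_⟩
  · simpa [hΦ.zero] using (integrable_zero R3 ℝ (volume : Measure R3))
  · simp [hΦ.zero]

lemma psiOf_zero (hΦ : IsPhi Φ Φ' k k') : PsiOf Φ 0 = 0 :=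
  le_antisymm (psiOf_le hΦ (zero_mem_admVP hΦ)) (psiOf_nonneg hΦ 0)

lemma admVP_nonempty (hΦ : IsPhi Φ Φ' k k') {s : ℝ} (hs : 0 ≤ s) :
    (AdmVP Φ s).Nonempty := by
  classical
  set B : Set R3 := Metric.closedBall (0:R3) 1 with hB
  have hBmeas : MeasurableSet B := measurableSet_closedBall
  have hBfin : volume B < ⊤ := measure_closedBall_lt_top
  have hBpos : (0:ENNReal) < volume B :=
    lt_of_lt_of_le (Metric.measure_ball_pos _ _ one_pos) (measure_mono Metric.ball_subset_closedBall)
  set V : ℝ := (volume B).toReal with hV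
  have hVpos : 0 < V := ENNReal.toReal_pos hBpos.ne' hBfin.ne
  set c : ℝ := s / V with hc
  have hc0 : 0 ≤ c := div_nonneg hs hVpos.le
  refine ⟨_, B.indicator (fun _ => c), fun v => Set.indicator_nonneg (fun _ _ => hc0) v,
    ?_, ?_, ?_, rfl⟩
  · rw [integrable_indicator_iff hBmeas]
    exact (integrableOn_const hBfin.ne)
  · rw [integral_indicator_const _ hBmeas, smul_eq_mul, measureReal_def, ← hV, mul_comm, hc,
      div_mul_cancel₀ _ hVpos.ne']
  · have hfun : (fun v : R3 => (1/2) * ‖v‖ ^ 2 * B.indicator (fun _ => c) v +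
        Φ (B.indicator (fun _ => c) v)) =
        B.indicator (fun v => (1/2) * ‖v‖ ^ 2 * c + Φ c) := by
      funext v
      by_cases hv : v ∈ B
      · simp [Set.indicator_of_mem hv]
      · simp [Set.indicator_of_notMem hv, hΦ.zero]
    rw [hfun, integrable_indicator_iff hBmeas]
    exact ((continuous_const.mul ((continuous_norm).pow 2)).mul
      continuous_const).add continuous_const |>.continuousOn.integrableOn_compact
        (isCompact_closedBall _ _)

end AuxVP

section AuxVP2

variable {Φ Φ' : ℝ → ℝ} {k k' : ℝ}

lemma kin_part_integrable (hΦ : IsPhi Φ Φ' k k') {g : R3 → ℝ} (hg0 : ∀ v, 0 ≤ g v)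
    (hgi : Integrable g)
    (hci : Integrable (fun v : R3 => (1/2) * ‖v‖ ^ 2 * g v + Φ (g v))) :
    Integrable (fun v : R3 => (1/2) * ‖v‖ ^ 2 * g v) := by
  refine hci.mono' (((continuous_const.mul ((continuous_norm).pow 2)).aestronglyMeasurable).mul
    hgi.aestronglyMeasurable) (Filter.Eventually.of_forall fun v => ?_)
  have h1 : 0 ≤ (1/2) * ‖v‖ ^ 2 * g v := by have := hg0 v; positivity
  rw [Real.norm_of_nonneg h1]
  have h2 : 0 ≤ Φ (g v) := hΦ.nonneg _ (hg0 v)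
  linarith

lemma cas_part_integrable (hΦ : IsPhi Φ Φ' k k') {g : R3 → ℝ} (hg0 : ∀ v, 0 ≤ g v)
    (hgi : Integrable g)
    (hci : Integrable (fun v : R3 => (1/2) * ‖v‖ ^ 2 * g v + Φ (g v))) :
    Integrable (fun v : R3 => Φ (g v)) := by
  refine hci.mono' (hΦ.comp_aesm hg0 hgi.aestronglyMeasurable)
    (Filter.Eventually.of_forall fun v => ?_)
  have h2 : 0 ≤ Φ (g v) := hΦ.nonneg _ (hg0 v)
  rw [Real.norm_of_nonneg h2]
  have h1 : 0 ≤ (1/2) * ‖v‖ ^ 2 * g v := by have := hg0 v; positivity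
  linarith

/-- Scaling a velocity profile by a constant `c ∈ [0,1]`. -/
lemma scale_profile (hΦ : IsPhi Φ Φ' k k') {g : R3 → ℝ} {c : ℝ} (hc0 : 0 ≤ c) (hc1 : c ≤ 1)
    (hg0 : ∀ v, 0 ≤ g v) (hgi : Integrable g)
    (hci : Integrable (fun v : R3 => (1/2) * ‖v‖ ^ 2 * g v + Φ (g v))) :
    Integrable (fun v : R3 => (1/2) * ‖v‖ ^ 2 * (c * g v) + Φ (c * g v)) ∧
    ∫ v, ((1/2) * ‖v‖ ^ 2 * (c * g v) + Φ (c * g v)) ≤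
      c * ∫ v, ((1/2) * ‖v‖ ^ 2 * g v + Φ (g v)) := by
  have hpt : ∀ v : R3, (1/2) * ‖v‖ ^ 2 * (c * g v) + Φ (c * g v) ≤
      c * ((1/2) * ‖v‖ ^ 2 * g v + Φ (g v)) := by
    intro v
    have h1 : Φ (c * g v) ≤ c * Φ (g v) := hΦ.scale hc0 hc1 (hg0 v)
    nlinarith [sq_nonneg ‖v‖]
  have hnn : ∀ v : R3, 0 ≤ (1/2) * ‖v‖ ^ 2 * (c * g v) + Φ (c * g v) :=
    cost_pt_nonneg hΦ (fun v => mul_nonneg hc0 (hg0 v))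
  have hcgia : AEStronglyMeasurable (fun v : R3 => (1/2) * ‖v‖ ^ 2 * (c * g v) + Φ (c * g v))
      volume := cost_aesm hΦ (fun v => mul_nonneg hc0 (hg0 v))
      (aestronglyMeasurable_const.mul hgi.aestronglyMeasurable)
  have hint : Integrable (fun v : R3 => (1/2) * ‖v‖ ^ 2 * (c * g v) + Φ (c * g v)) := by
    refine (hci.const_mul c).mono' hcgia (Filter.Eventually.of_forall fun v => ?_)
    rw [Real.norm_of_nonneg (hnn v)]
    exact hpt v
  refine ⟨hint, ?_⟩
  calc ∫ v, ((1/2) * ‖v‖ ^ 2 * (c * g v) + Φ (c * g v))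
      ≤ ∫ v, c * ((1/2) * ‖v‖ ^ 2 * g v + Φ (g v)) :=
        integral_mono hint (hci.const_mul c) hpt
    _ = c * ∫ v, ((1/2) * ‖v‖ ^ 2 * g v + Φ (g v)) := integral_const_mul c _

lemma scale_mem_admVP (hΦ : IsPhi Φ Φ' k k') {s r c : ℝ} (hc0 : 0 ≤ c) (hc1 : c ≤ 1)
    (hr : r ∈ AdmVP Φ s) :
    ∃ r' ∈ AdmVP Φ (c * s), r' ≤ c * r := by
  obtain ⟨g, hg0, hgi, hgm, hci, hreq⟩ := hr
  obtain ⟨hint, hle⟩ := scale_profile hΦ hc0 hc1 hg0 hgi hci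
  refine ⟨_, ⟨fun v => c * g v, fun v => mul_nonneg hc0 (hg0 v), hgi.const_mul c, ?_,
    hint, rfl⟩, ?_⟩
  · rw [integral_const_mul, hgm]
  · rw [hreq]; exact hle

lemma psiOf_mono (hΦ : IsPhi Φ Φ' k k') : Monotone (PsiOf Φ) := by
  intro s' s hss
  by_cases hs' : s' < 0
  · have hempty : AdmVP Φ s' = ∅ := by
      ext r
      simp only [Set.mem_empty_iff_false, iff_false]
      rintro ⟨g, hg0, hgi, hgm, -, -⟩
      have : 0 ≤ ∫ v, g v := integral_nonneg hg0
      rw [hgm] at this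
      exact absurd this (not_le.mpr hs')
    rw [psiOf_eq_sInf, hempty, Real.sInf_empty]
    exact psiOf_nonneg hΦ s
  · push_neg at hs'
    have hs : 0 ≤ s := hs'.trans hss
    rw [psiOf_eq_sInf Φ s]
    refine le_csInf (admVP_nonempty hΦ hs) (fun r hr => ?_)
    by_cases hs0 : s = 0
    · have : s' = 0 := le_antisymm (hs0 ▸ hss) hs'
      rw [this, psiOf_zero hΦ]
      exact admVP_nonneg hΦ hr
    · have hspos : 0 < s := lt_of_le_of_ne hs (Ne.symm hs0)
      have hc0 : 0 ≤ s' / s := div_nonneg hs' hs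
      have hc1 : s' / s ≤ 1 := div_le_one_of_le₀ hss hs
      obtain ⟨r', hr'mem, hr'le⟩ := scale_mem_admVP hΦ hc0 hc1 hr
      rw [div_mul_cancel₀ s' hs0] at hr'mem
      have h1 : PsiOf Φ s' ≤ r' := psiOf_le hΦ hr'mem
      have h2 : s' / s * r ≤ r := by
        have := admVP_nonneg hΦ hr
        nlinarith
      linarith

lemma psiOf_measurable (hΦ : IsPhi Φ Φ' k k') : Measurable (PsiOf Φ) :=
  (psiOf_mono hΦ).measurable

end AuxVP2

section AuxVP3

variable {Φ Φ' : ℝ → ℝ} {k k' : ℝ}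

/-- Velocity rescaling: `Ψ(L³ s) ≤ L⁵ Ψ(s)` for `L ≥ 1`. -/
lemma psiOf_scaleV (hΦ : IsPhi Φ Φ' k k') {s : ℝ} (hs : 0 ≤ s) {L : ℝ} (hL : 1 ≤ L) :
    PsiOf Φ (L ^ (3:ℕ) * s) ≤ L ^ (5:ℕ) * PsiOf Φ s := by
  have hL0 : (0:ℝ) < L := lt_of_lt_of_le one_pos hL
  have hL5 : (0:ℝ) < L ^ (5:ℕ) := by positivity
  have key : ∀ r ∈ AdmVP Φ s, PsiOf Φ (L ^ (3:ℕ) * s) ≤ L ^ (5:ℕ) * r := by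
    intro r hr
    obtain ⟨g, hg0, hgi, hgm, hci, hreq⟩ := hr
    have hkin := kin_part_integrable hΦ hg0 hgi hci
    have hcas := cas_part_integrable hΦ hg0 hgi hci
    set gL : R3 → ℝ := fun v => g (L⁻¹ • v) with hgL
    have hinv : L⁻¹ ≠ 0 := inv_ne_zero hL0.ne'
    have hgLi : Integrable gL := (integrable_comp_smul_iff volume g hinv).mpr hgi
    have hgLm : (∫ v, gL v) = L ^ (3:ℕ) * s := by
      rw [hgL]
      simp only
      rw [Measure.integral_comp_inv_smul volume g L, finrank_euclideanSpace_fin,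
        abs_of_nonneg (by positivity : (0:ℝ) ≤ L ^ 3), smul_eq_mul, hgm]
    set F : R3 → ℝ := fun w => L ^ (2:ℕ) * ((1/2) * ‖w‖ ^ 2 * g w) + Φ (g w) with hF
    have hFi : Integrable F := (hkin.const_mul _).add hcas
    have hcomp : (fun v : R3 => (1/2) * ‖v‖ ^ 2 * gL v + Φ (gL v)) =
        fun v => F (L⁻¹ • v) := by
      funext v
      have hvv : L • (L⁻¹ • v) = v := by
        rw [smul_smul, mul_inv_cancel₀ hL0.ne', one_smul]
      have hnorm : ‖L⁻¹ • v‖ = L⁻¹ * ‖v‖ := by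
        rw [norm_smul, Real.norm_of_nonneg (by positivity)]
      rw [hF]
      simp only [hgL, hnorm]
      congr 1
      field_simp
    have hLci : Integrable (fun v : R3 => (1/2) * ‖v‖ ^ 2 * gL v + Φ (gL v)) := by
      rw [hcomp]
      exact (integrable_comp_smul_iff volume F hinv).mpr hFi
    have hLc_val : ∫ v, ((1/2) * ‖v‖ ^ 2 * gL v + Φ (gL v)) =
        L ^ (3:ℕ) * ∫ w, F w := by
      rw [hcomp, Measure.integral_comp_inv_smul volume F L, finrank_euclideanSpace_fin,
        abs_of_nonneg (by positivity : (0:ℝ) ≤ L ^ 3), smul_eq_mul]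
    have hmem : (∫ v, ((1/2) * ‖v‖ ^ 2 * gL v + Φ (gL v))) ∈ AdmVP Φ (L ^ (3:ℕ) * s) :=
      ⟨gL, fun v => hg0 _, hgLi, hgLm, hLci, rfl⟩
    have h1 : PsiOf Φ (L ^ (3:ℕ) * s) ≤ L ^ (3:ℕ) * ∫ w, F w := by
      rw [← hLc_val]; exact psiOf_le hΦ hmem
    have hKnn : 0 ≤ ∫ w, (1/2) * ‖w‖ ^ 2 * g w :=
      integral_nonneg (fun w => by have := hg0 w; positivity)
    have hCnn : 0 ≤ ∫ w, Φ (g w) := integral_nonneg (fun w => hΦ.nonneg _ (hg0 w))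
    have hFval : ∫ w, F w = L ^ (2:ℕ) * (∫ w, (1/2) * ‖w‖ ^ 2 * g w) + ∫ w, Φ (g w) := by
      rw [hF]
      rw [integral_add (hkin.const_mul _) hcas, integral_const_mul]
    have hrval : r = (∫ w, (1/2) * ‖w‖ ^ 2 * g w) + ∫ w, Φ (g w) := by
      rw [hreq, integral_add hkin hcas]
    calc PsiOf Φ (L ^ (3:ℕ) * s) ≤ L ^ (3:ℕ) * ∫ w, F w := h1
        _ = L ^ (5:ℕ) * (∫ w, (1/2) * ‖w‖ ^ 2 * g w) + L ^ (3:ℕ) * ∫ w, Φ (g w) := by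
            rw [hFval]; ring
        _ ≤ L ^ (5:ℕ) * (∫ w, (1/2) * ‖w‖ ^ 2 * g w) + L ^ (5:ℕ) * ∫ w, Φ (g w) := by
            have : (L:ℝ) ^ (3:ℕ) ≤ L ^ (5:ℕ) := pow_le_pow_right₀ hL (by norm_num)
            nlinarith
        _ = L ^ (5:ℕ) * r := by rw [hrval]; ring
  rcases eq_or_lt_of_le hs with hs0 | hspos
  · simp [← hs0, psiOf_zero hΦ]
  · have hne := admVP_nonempty hΦ hs
    have h2 : PsiOf Φ (L ^ (3:ℕ) * s) / L ^ (5:ℕ) ≤ sInf (AdmVP Φ s) := by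
      refine le_csInf hne (fun r hr => ?_)
      rw [div_le_iff₀ hL5]
      calc PsiOf Φ (L ^ (3:ℕ) * s) ≤ L ^ (5:ℕ) * r := key r hr
        _ = r * L ^ (5:ℕ) := mul_comm _ _
    rw [psiOf_eq_sInf]
    calc PsiOf Φ (L ^ (3:ℕ) * s) = PsiOf Φ (L ^ (3:ℕ) * s) / L ^ (5:ℕ) * L ^ (5:ℕ) := by
          field_simp
      _ ≤ sInf (AdmVP Φ s) * L ^ (5:ℕ) := mul_le_mul_of_nonneg_right h2 hL5.le
      _ = L ^ (5:ℕ) * sInf (AdmVP Φ s) := mul_comm _ _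

/-- Near-minimizers with an everywhere-nonnegative measurable representative. -/
lemma near_min (hΦ : IsPhi Φ Φ' k k') {s : ℝ} (hs : 0 ≤ s) {ε : ℝ} (hε : 0 < ε) :
    ∃ g : R3 → ℝ, Measurable g ∧ (∀ v, 0 ≤ g v) ∧ Integrable g ∧ (∫ v, g v) = s ∧
      Integrable (fun v => (1/2) * ‖v‖ ^ 2 * g v + Φ (g v)) ∧
      (∫ v, ((1/2) * ‖v‖ ^ 2 * g v + Φ (g v))) ≤ PsiOf Φ s + ε := by
  obtain ⟨r, hr, hrlt⟩ := Real.lt_sInf_add_pos (admVP_nonempty hΦ hs) hε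
  obtain ⟨g, hg0, hgi, hgm, hci, hreq⟩ := hr
  set G : R3 → ℝ := fun v => max (hgi.aestronglyMeasurable.mk g v) 0 with hG
  have hGmeas : Measurable G :=
    (hgi.aestronglyMeasurable.stronglyMeasurable_mk.measurable).max measurable_const
  have hGg : G =ᵐ[volume] g := by
    filter_upwards [hgi.aestronglyMeasurable.ae_eq_mk] with v hv
    rw [hG]; simp only
    rw [← hv, max_eq_left (hg0 v)]
  have hG0 : ∀ v, 0 ≤ G v := fun v => le_max_right _ _
  have hGi : Integrable G := hgi.congr hGg.symm
  have hGm : (∫ v, G v) = s := by rw [integral_congr_ae hGg, hgm]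
  have hcostG : (fun v : R3 => (1/2) * ‖v‖ ^ 2 * G v + Φ (G v)) =ᵐ[volume]
      (fun v : R3 => (1/2) * ‖v‖ ^ 2 * g v + Φ (g v)) := by
    filter_upwards [hGg] with v hv
    rw [hv]
  have hGci : Integrable (fun v : R3 => (1/2) * ‖v‖ ^ 2 * G v + Φ (G v)) :=
    hci.congr hcostG.symm
  refine ⟨G, hGmeas, hG0, hGi, hGm, hGci, ?_⟩
  rw [integral_congr_ae hcostG, ← hreq, psiOf_eq_sInf]
  exact hrlt.le

section AuxVP4

variable {Φ Φ' : ℝ → ℝ} {k k' : ℝ}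

lemma volume_prod_eq : (volume : Measure (R3 × R3)) = (volume : Measure R3).prod volume :=
  Measure.volume_eq_prod R3 R3

lemma rho_facts (hΦ : IsPhi Φ Φ' k k') {M : ℝ} {f₀ : R3 × R3 → ℝ} (hf₀ : MemFM Φ M f₀) :
    MemRM (PsiOf Φ) M (spatialDensity f₀) ∧
    (∫ x, PsiOf Φ (spatialDensity f₀ x)) ≤ Ekin f₀ + Casimir Φ f₀ := by
  have hf₀p : Integrable f₀ ((volume : Measure R3).prod volume) := by
    rw [← volume_prod_eq]; exact hf₀.integrable
  have hkin' : Integrable (fun p : R3 × R3 => (1/2) * ‖p.2‖ ^ 2 * f₀ p) := by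
    refine (hf₀.kin_int.const_mul (1/2)).congr (Filter.Eventually.of_forall fun p => ?_)
    ring
  set I : R3 × R3 → ℝ := fun p => (1/2) * ‖p.2‖ ^ 2 * f₀ p + Φ (f₀ p) with hIdef
  have hI : Integrable I := hkin'.add hf₀.cas_int
  have hIp : Integrable I ((volume : Measure R3).prod volume) := by
    rw [← volume_prod_eq]; exact hI
  have hslice : ∀ᵐ x ∂(volume : Measure R3), Integrable (fun v => I (x, v)) volume :=
    hIp.prod_right_ae
  have hfslice : ∀ᵐ x ∂(volume : Measure R3), Integrable (fun v => f₀ (x, v)) volume :=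
    hf₀p.prod_right_ae
  have hK_int : Integrable (fun x => ∫ v, I (x, v)) volume := hIp.integral_prod_left
  have hρ_int : Integrable (spatialDensity f₀) volume := hf₀p.integral_prod_left
  have hρ0 : ∀ x, 0 ≤ spatialDensity f₀ x := fun x => integral_nonneg fun v => hf₀.nonneg _
  have hae_le : ∀ᵐ x ∂(volume : Measure R3),
      PsiOf Φ (spatialDensity f₀ x) ≤ ∫ v, I (x, v) := by
    filter_upwards [hslice, hfslice] with x h1 h2
    exact psiOf_le hΦ ⟨fun v => f₀ (x, v), fun v => hf₀.nonneg _, h2, rfl, h1, rfl⟩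
  have hpsi_meas : AEStronglyMeasurable (fun x => PsiOf Φ (spatialDensity f₀ x)) volume :=
    ((psiOf_measurable hΦ).comp_aemeasurable
      hρ_int.aestronglyMeasurable.aemeasurable).aestronglyMeasurable
  have hpsi_int : Integrable (fun x => PsiOf Φ (spatialDensity f₀ x)) volume := by
    refine hK_int.mono' hpsi_meas ?_
    filter_upwards [hae_le] with x hx
    rw [Real.norm_of_nonneg (psiOf_nonneg hΦ _)]
    exact hx
  have hmass : (∫ x, spatialDensity f₀ x) = M := by
    have h1 := integral_integral (μ := (volume : Measure R3)) (f := fun x v => f₀ (x, v)) hf₀p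
    have h2 : (∫ z : R3 × R3, f₀ (z.1, z.2) ∂((volume : Measure R3).prod volume)) =
        ∫ p, f₀ p := by
      rw [← volume_prod_eq]
    calc (∫ x, spatialDensity f₀ x) = ∫ x, ∫ v, f₀ (x, v) := rfl
      _ = ∫ z : R3 × R3, f₀ (z.1, z.2) ∂((volume : Measure R3).prod volume) := h1
      _ = ∫ p, f₀ p := h2
      _ = M := hf₀.mass
  refine ⟨⟨hρ0, hρ_int, hmass, hpsi_int⟩, ?_⟩
  have hIeq : (∫ p, I p) = Ekin f₀ + Casimir Φ f₀ := by
    rw [hIdef]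
    rw [integral_add hkin' hf₀.cas_int]
    have : (∫ p : R3 × R3, (1/2) * ‖p.2‖ ^ 2 * f₀ p) =
        (1/2) * ∫ p : R3 × R3, ‖p.2‖ ^ 2 * f₀ p := by
      simp_rw [mul_assoc]
      exact integral_const_mul _ _
    rw [this]
    rfl
  calc (∫ x, PsiOf Φ (spatialDensity f₀ x)) ≤ ∫ x, ∫ v, I (x, v) :=
        integral_mono_ae hpsi_int hK_int hae_le
    _ = ∫ z : R3 × R3, I (z.1, z.2) ∂((volume : Measure R3).prod volume) :=
        integral_integral (f := fun x v => I (x, v)) hIp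
    _ = ∫ p, I p := by rw [← volume_prod_eq]
    _ = Ekin f₀ + Casimir Φ f₀ := hIeq

end AuxVP4

section AuxVP5

variable {Φ Φ' : ℝ → ℝ} {k k' : ℝ}

lemma construct_f (hΦ : IsPhi Φ Φ' k k') {M : ℝ} {ρ : R3 → ℝ}
    (hρ : MemRM (PsiOf Φ) M ρ) {η ε : ℝ} (hη : 0 < η) (hε : 0 < ε) :
    ∃ f, MemFM Φ M f ∧ spatialDensity f = ρ ∧
      Ekin f + Casimir Φ f ≤ (1+η) ^ ((5:ℝ)/3) * (∫ x, PsiOf Φ (ρ x)) + ε * M := by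
  classical
  set β : ℝ := 1 + η with hβdef
  have hβ1 : 1 < β := by rw [hβdef]; linarith
  have hβ0 : 0 < β := by linarith
  have hlogβ : 0 < Real.log β := Real.log_pos hβ1
  set b : ℤ → ℝ := fun j => β ^ j with hbdef
  have hbpos : ∀ j, 0 < b j := fun j => zpow_pos hβ0 j
  choose g hgMeas hg0 hgInt hgMass hgCost hgLe using
    fun j : ℤ => near_min hΦ (hbpos j).le (mul_pos hε (hbpos j))
  set J : ℝ → ℤ := fun s => ⌈Real.log s / Real.log β⌉ with hJdef
  have hJle : ∀ s, 0 < s → s ≤ b (J s) := by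
    intro s hs
    have h1 : Real.log s / Real.log β ≤ ((J s : ℤ) : ℝ) := Int.le_ceil _
    have h2 : Real.log s ≤ ((J s : ℤ) : ℝ) * Real.log β := by
      rwa [div_le_iff₀ hlogβ] at h1
    have h3 : Real.log s ≤ Real.log (b (J s)) := by
      rw [hbdef]; simpa [Real.log_zpow] using h2
    exact (Real.log_le_log_iff hs (hbpos _)).mp h3
  have hJge : ∀ s, 0 < s → b (J s) ≤ β * s := by
    intro s hs
    have h1 : ((J s : ℤ) : ℝ) < Real.log s / Real.log β + 1 := Int.ceil_lt_add_one _
    have h2 : ((J s : ℤ) : ℝ) - 1 < Real.log s / Real.log β := by linarith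
    have h3 : (((J s : ℤ) : ℝ) - 1) * Real.log β < Real.log s :=
      (lt_div_iff₀ hlogβ).mp h2
    have h4 : Real.log (β ^ (J s - 1)) < Real.log s := by
      rw [Real.log_zpow]; push_cast; linarith
    have h5 : β ^ (J s - 1) < s := (Real.log_lt_log_iff (zpow_pos hβ0 _) hs).mp h4
    have h6 : b (J s) = β ^ (J s - 1) * β := by
      simp only [hbdef]
      rw [← zpow_add_one₀ hβ0.ne', sub_add_cancel]
    rw [h6]
    nlinarith [zpow_pos hβ0 (J s - 1)]
  set c : ℝ → ℝ := fun s => if 0 < s then s / b (J s) else 0 with hcdef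
  have hc_nonneg : ∀ s, 0 ≤ c s := by
    intro s
    simp only [hcdef]
    by_cases h : 0 < s
    · rw [if_pos h]; exact div_nonneg h.le (hbpos _).le
    · rw [if_neg h]
  have hc_le_one : ∀ s, c s ≤ 1 := by
    intro s
    simp only [hcdef]
    by_cases h : 0 < s
    · rw [if_pos h]; exact div_le_one_of_le₀ (hJle s h) (hbpos _).le
    · rw [if_neg h]; norm_num
  set f : R3 × R3 → ℝ := fun p => c (ρ p.1) * g (J (ρ p.1)) p.2 with hfdef
  set If : R3 × R3 → ℝ := fun p => (1/2) * ‖p.2‖ ^ 2 * f p + Φ (f p) with hIfdef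
  have hf0all : ∀ p, 0 ≤ f p := fun p => mul_nonneg (hc_nonneg _) (hg0 _ _)
  have hIf0all : ∀ p, 0 ≤ If p := by
    intro p
    rw [hIfdef]
    have h1 : 0 ≤ (1/2) * ‖p.2‖ ^ 2 * f p := by have := hf0all p; positivity
    exact add_nonneg h1 (hΦ.nonneg _ (hf0all p))
  -- the per-slice facts
  have slice : ∀ x : R3, Integrable (fun v => f (x, v)) volume ∧
      (∫ v, f (x, v)) = ρ x ∧
      Integrable (fun v => If (x, v)) volume ∧
      (∫ v, If (x, v)) ≤ β ^ ((5:ℝ)/3) * PsiOf Φ (ρ x) + ε * ρ x := by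
    intro x
    by_cases hx : 0 < ρ x
    · have hcx : c (ρ x) = ρ x / b (J (ρ x)) := by rw [hcdef]; exact if_pos hx
      set j : ℤ := J (ρ x) with hjdef
      set cc : ℝ := ρ x / b j with hccdef
      have hcc0 : 0 ≤ cc := div_nonneg hx.le (hbpos _).le
      have hcc1 : cc ≤ 1 := div_le_one_of_le₀ (hJle _ hx) (hbpos _).le
      have hccb : cc * b j = ρ x := div_mul_cancel₀ _ (hbpos j).ne'
      obtain ⟨hints, hle⟩ := scale_profile hΦ hcc0 hcc1 (hg0 j) (hgInt j) (hgCost j)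
      have hfx : (fun v => f (x, v)) = fun v => cc * g j v := by
        funext v
        simp only [hfdef]
        rw [hcx]
      have hIfx : (fun v => If (x, v)) = fun v =>
          (1/2) * ‖v‖ ^ 2 * (cc * g j v) + Φ (cc * g j v) := by
        funext v
        have hfv : f (x, v) = cc * g j v := by simpa using congrFun hfx v
        simp only [hIfdef]
        rw [hfv]
      refine ⟨?_, ?_, ?_, ?_⟩
      · rw [hfx]; exact (hgInt j).const_mul cc
      · rw [hfx]; rw [integral_const_mul, hgMass j]; exact hccb
      · rw [hIfx]; exact hints
      · rw [hIfx]
        -- the L-scaling step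
        have hnn : (0:ℝ) ≤ b j / ρ x := div_nonneg (hbpos j).le hx.le
        have hge1 : 1 ≤ b j / ρ x := (one_le_div hx).mpr (hJle _ hx)
        set L : ℝ := (b j / ρ x) ^ ((1:ℝ)/3) with hLdef
        have hL1 : 1 ≤ L := Real.one_le_rpow hge1 (by norm_num)
        have hL3 : L ^ (3:ℕ) = b j / ρ x := by
          rw [hLdef, ← Real.rpow_natCast ((b j / ρ x) ^ ((1:ℝ)/3)) 3,
            ← Real.rpow_mul hnn]
          norm_num
        have hL3s : L ^ (3:ℕ) * ρ x = b j := by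
          rw [hL3]; exact div_mul_cancel₀ _ hx.ne'
        have hL5 : L ^ (5:ℕ) ≤ β ^ ((5:ℝ)/3) := by
          have h1 : L ^ (5:ℕ) = (b j / ρ x) ^ ((5:ℝ)/3) := by
            rw [hLdef, ← Real.rpow_natCast ((b j / ρ x) ^ ((1:ℝ)/3)) 5,
              ← Real.rpow_mul hnn]
            norm_num
          rw [h1]
          refine Real.rpow_le_rpow hnn ?_ (by norm_num)
          rw [div_le_iff₀ hx]
          exact hJge _ hx
        have hpsiV := psiOf_scaleV hΦ hx.le hL1
        rw [hL3s] at hpsiV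
        have hΨbj : PsiOf Φ (b j) ≤ β ^ ((5:ℝ)/3) * PsiOf Φ (ρ x) :=
          le_trans hpsiV (mul_le_mul_of_nonneg_right hL5 (psiOf_nonneg hΦ _))
        have hcost_le : cc * (∫ v, ((1/2) * ‖v‖ ^ 2 * g j v + Φ (g j v))) ≤
            cc * (PsiOf Φ (b j) + ε * b j) :=
          mul_le_mul_of_nonneg_left (hgLe j) hcc0
        have hcc_psi : cc * (PsiOf Φ (b j) + ε * b j) =
            cc * PsiOf Φ (b j) + ε * ρ x := by
          rw [mul_add]
          congr 1
          rw [show cc * (ε * b j) = ε * (cc * b j) by ring, hccb]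
        have hcc_psi_le : cc * PsiOf Φ (b j) ≤ PsiOf Φ (b j) := by
          have := psiOf_nonneg hΦ (b j)
          nlinarith
        calc ∫ v, ((1/2) * ‖v‖ ^ 2 * (cc * g j v) + Φ (cc * g j v))
            ≤ cc * ∫ v, ((1/2) * ‖v‖ ^ 2 * g j v + Φ (g j v)) := hle
          _ ≤ cc * (PsiOf Φ (b j) + ε * b j) := hcost_le
          _ = cc * PsiOf Φ (b j) + ε * ρ x := hcc_psi
          _ ≤ PsiOf Φ (b j) + ε * ρ x := by linarith
          _ ≤ β ^ ((5:ℝ)/3) * PsiOf Φ (ρ x) + ε * ρ x := by linarith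
    · have hρx0 : ρ x = 0 := le_antisymm (not_lt.mp hx) (hρ.nonneg x)
      have hcx : c (ρ x) = 0 := by simp only [hcdef]; exact if_neg hx
      have hfx : (fun v => f (x, v)) = fun _ => (0:ℝ) := by
        funext v
        simp only [hfdef]
        rw [hcx, zero_mul]
      have hIfx : (fun v => If (x, v)) = fun _ => (0:ℝ) := by
        funext v
        have hfv : f (x, v) = 0 := by simpa using congrFun hfx v
        simp only [hIfdef]
        rw [hfv, hΦ.zero]
        ring
      refine ⟨?_, ?_, ?_, ?_⟩
      · rw [hfx]; exact integrable_zero _ _ _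
      · rw [hfx, hρx0]; simp
      · rw [hIfx]; exact integrable_zero _ _ _
      · rw [hIfx, hρx0, psiOf_zero hΦ]
        simp
  -- measurability
  have hρaesm := hρ.integrable.aestronglyMeasurable
  have hρm_meas : Measurable (hρaesm.mk ρ) := hρaesm.stronglyMeasurable_mk.measurable
  have hJmeas : Measurable J := by
    rw [hJdef]
    exact Int.measurable_ceil.comp (Real.measurable_log.div_const _)
  have hbJ : Measurable fun s : ℝ => b (J s) := (measurable_of_countable b).comp hJmeas
  have hcmeas : Measurable c := by
    rw [hcdef]
    exact Measurable.ite (measurableSet_lt measurable_const measurable_id)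
      (measurable_id.div hbJ) measurable_const
  have hu : Measurable (fun q : R3 × ℤ => g q.2 q.1) :=
    measurable_from_prod_countable_left fun j => hgMeas j
  have hF0meas : Measurable (fun p : R3 × R3 => c (hρaesm.mk ρ p.1) *
      g (J (hρaesm.mk ρ p.1)) p.2) := by
    refine ((hcmeas.comp (hρm_meas.comp measurable_fst)).mul ?_)
    exact hu.comp (measurable_snd.prodMk
      (hJmeas.comp (hρm_meas.comp measurable_fst)))
  have haeeq : f =ᵐ[(volume : Measure R3).prod volume]
      (fun p : R3 × R3 => c (hρaesm.mk ρ p.1) * g (J (hρaesm.mk ρ p.1)) p.2) := by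
    have hN : (volume : Measure R3) {x | ¬ ρ x = hρaesm.mk ρ x} = 0 := hρaesm.ae_eq_mk
    refine measure_mono_null ?_ (by
      rw [Measure.prod_prod, hN, zero_mul] :
        ((volume : Measure R3).prod volume) ({x | ¬ ρ x = hρaesm.mk ρ x} ×ˢ Set.univ) = 0)
    intro p hp
    refine ⟨fun heq => hp ?_, Set.mem_univ _⟩
    show f p = _
    simp only [hfdef]
    rw [heq]
  have hf_aesm : AEStronglyMeasurable f ((volume : Measure R3).prod volume) :=
    (hF0meas.aestronglyMeasurable).congr haeeq.symm
  have hIf_aesm : AEStronglyMeasurable If ((volume : Measure R3).prod volume) := by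
    rw [hIfdef]
    refine AEStronglyMeasurable.add ?_ (hΦ.comp_aesm hf0all hf_aesm)
    exact ((continuous_const.mul ((continuous_norm.comp continuous_snd).pow 2)).aestronglyMeasurable).mul hf_aesm
  -- integrability on the product
  set B : R3 → ℝ := fun x => β ^ ((5:ℝ)/3) * PsiOf Φ (ρ x) + ε * ρ x with hBdef
  have hB_int : Integrable B volume := by
    rw [hBdef]
    exact (hρ.psi_int.const_mul _).add (hρ.integrable.const_mul ε)
  have hIf_int : Integrable If ((volume : Measure R3).prod volume) := by
    refine (integrable_prod_iff hIf_aesm).mpr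
      ⟨Filter.Eventually.of_forall fun x => (slice x).2.2.1, ?_⟩
    have heq : (fun x => ∫ v, ‖If (x, v)‖) = fun x => ∫ v, If (x, v) := by
      funext x
      exact integral_congr_ae (Filter.Eventually.of_forall fun v =>
        Real.norm_of_nonneg (hIf0all (x, v)))
    rw [heq]
    refine hB_int.mono' (hIf_aesm.integral_prod_right') (Filter.Eventually.of_forall fun x => ?_)
    rw [Real.norm_of_nonneg (integral_nonneg fun v => hIf0all (x, v))]
    exact (slice x).2.2.2
  have hf_int : Integrable f ((volume : Measure R3).prod volume) := by
    refine (integrable_prod_iff hf_aesm).mpr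
      ⟨Filter.Eventually.of_forall fun x => (slice x).1, ?_⟩
    have heq : (fun x => ∫ v, ‖f (x, v)‖) = ρ := by
      funext x
      rw [show (∫ v, ‖f (x, v)‖) = ∫ v, f (x, v) from integral_congr_ae
        (Filter.Eventually.of_forall fun v => Real.norm_of_nonneg (hf0all (x, v)))]
      exact (slice x).2.1
    rw [heq]
    exact hρ.integrable
  have hkin'' : Integrable (fun p : R3 × R3 => (1/2) * ‖p.2‖ ^ 2 * f p)
      ((volume : Measure R3).prod volume) := by
    refine hIf_int.mono'
      (((continuous_const.mul ((continuous_norm.comp continuous_snd).pow 2)).aestronglyMeasurable).mul hf_aesm)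
      (Filter.Eventually.of_forall fun p => ?_)
    have h1 : 0 ≤ (1/2) * ‖p.2‖ ^ 2 * f p := by have := hf0all p; positivity
    rw [Real.norm_of_nonneg h1]
    have h2 : 0 ≤ Φ (f p) := hΦ.nonneg _ (hf0all p)
    have h3 : If p = (1/2) * ‖p.2‖ ^ 2 * f p + Φ (f p) := by rw [hIfdef]
    rw [h3]
    linarith
  -- MemFM
  have hmemFM : MemFM Φ M f := by
    refine ⟨hf0all, ?_, ?_, ?_, ?_⟩
    · rw [volume_prod_eq]; exact hf_int
    · have h1 := integral_integral (μ := (volume : Measure R3)) (f := fun x v => f (x, v)) hf_int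
      have h2 : (∫ x, ∫ v, f (x, v)) = ∫ x, ρ x := by
        congr 1
        funext x
        exact (slice x).2.1
      rw [volume_prod_eq]
      rw [← h1, h2, hρ.mass]
    · -- kin_int
      rw [volume_prod_eq]
      refine (hIf_int.const_mul 2).mono'
        ((((continuous_norm.comp continuous_snd).pow 2).aestronglyMeasurable).mul hf_aesm)
        (Filter.Eventually.of_forall fun p => ?_)
      have h1 : 0 ≤ ‖p.2‖ ^ 2 * f p := by have := hf0all p; positivity
      rw [Real.norm_of_nonneg h1]
      have h2 : 0 ≤ Φ (f p) := hΦ.nonneg _ (hf0all p)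
      have h3 : If p = (1/2) * ‖p.2‖ ^ 2 * f p + Φ (f p) := by rw [hIfdef]
      have h4 : 2 * If p = ‖p.2‖ ^ 2 * f p + 2 * Φ (f p) := by rw [h3]; ring
      linarith
    · -- cas_int
      rw [volume_prod_eq]
      refine hIf_int.mono' (hΦ.comp_aesm hf0all hf_aesm)
        (Filter.Eventually.of_forall fun p => ?_)
      have h2 : 0 ≤ Φ (f p) := hΦ.nonneg _ (hf0all p)
      rw [Real.norm_of_nonneg h2]
      have h1 : 0 ≤ (1/2) * ‖p.2‖ ^ 2 * f p := by have := hf0all p; positivity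
      have h3 : If p = (1/2) * ‖p.2‖ ^ 2 * f p + Φ (f p) := by rw [hIfdef]
      rw [h3]
      linarith
  have hsd : spatialDensity f = ρ := funext fun x => (slice x).2.1
  refine ⟨f, hmemFM, hsd, ?_⟩
  -- energy bound
  have hcas : Integrable (fun p : R3 × R3 => Φ (f p)) ((volume : Measure R3).prod volume) := by
    have := hmemFM.cas_int
    rwa [volume_prod_eq] at this
  have hsum : Ekin f + Casimir Φ f = ∫ p, If p := by
    have h0 : (∫ p : R3 × R3, If p) = ∫ p : R3 × R3, ((1/2) * ‖p.2‖ ^ 2 * f p + Φ (f p)) := by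
      rw [hIfdef]
    have hkin''' : Integrable (fun p : R3 × R3 => (1/2) * ‖p.2‖ ^ 2 * f p) := by
      rw [volume_prod_eq]; exact hkin''
    rw [h0, integral_add hkin''' hmemFM.cas_int]
    have h5 : (∫ p : R3 × R3, (1/2) * ‖p.2‖ ^ 2 * f p) =
        (1/2) * ∫ p : R3 × R3, ‖p.2‖ ^ 2 * f p := by
      simp_rw [mul_assoc]
      exact integral_const_mul _ _
    rw [h5]
    rfl
  have hIf_vol : Integrable If := by rw [volume_prod_eq]; exact hIf_int
  have hfinal : (∫ p, If p) ≤ β ^ ((5:ℝ)/3) * (∫ x, PsiOf Φ (ρ x)) + ε * M := by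
    have h1 : (∫ p, If p) = ∫ x, ∫ v, If (x, v) := by
      rw [volume_prod_eq]
      exact (integral_integral (f := fun x v => If (x, v)) hIf_int).symm
    have h2 : (∫ x, ∫ v, If (x, v)) ≤ ∫ x, B x :=
      integral_mono hIf_int.integral_prod_left hB_int (fun x => (slice x).2.2.2)
    have h3 : (∫ x, B x) = β ^ ((5:ℝ)/3) * (∫ x, PsiOf Φ (ρ x)) + ε * M := by
      rw [hBdef]
      rw [integral_add (hρ.psi_int.const_mul _) (hρ.integrable.const_mul ε),
        integral_const_mul, integral_const_mul, hρ.mass]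
    rw [h1]
    rw [h3] at h2
    exact h2
  rw [hsum]
  exact hfinal

end AuxVP5

/-- if `f₀` minimizes `H_C` on `F_M`, then `ρ_{f₀} ∈ R_M`
minimizes the reduced functional `H_r` on `R_M`. -/
theorem project_minimizer
    (Φ Φ' : ℝ → ℝ) (k k' : ℝ) (hΦ : IsPhi Φ Φ' k k') (M : ℝ) (hM : 0 < M)
    (f₀ : R3 × R3 → ℝ) (hf₀ : MemFM Φ M f₀)
    (hmin : ∀ g, MemFM Φ M g → HC Φ f₀ ≤ HC Φ g) :
    MemRM (PsiOf Φ) M (spatialDensity f₀) ∧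
    ∀ ρ, MemRM (PsiOf Φ) M ρ → Hr (PsiOf Φ) (spatialDensity f₀) ≤ Hr (PsiOf Φ) ρ := by
  obtain ⟨hmem, hle⟩ := rho_facts hΦ hf₀
  refine ⟨hmem, ?_⟩
  intro ρ hρ
  have key : ∀ η : ℝ, 0 < η → ∀ ε : ℝ, 0 < ε → Hr (PsiOf Φ) (spatialDensity f₀) ≤
      (1+η) ^ ((5:ℝ)/3) * (∫ x, PsiOf Φ (ρ x)) + ε * M + Epot ρ := by
    intro η hη ε hε
    obtain ⟨f, hfFM, hsd, hbound⟩ := construct_f hΦ hρ hη hε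
    have h1 : Hr (PsiOf Φ) (spatialDensity f₀) ≤ HC Φ f₀ := by
      simp only [Hr, HC]
      linarith [hle]
    have h2 : HC Φ f₀ ≤ HC Φ f := hmin f hfFM
    have h3 : HC Φ f = Ekin f + Casimir Φ f + Epot ρ := by
      simp only [HC, hsd]
      ring
    calc Hr (PsiOf Φ) (spatialDensity f₀) ≤ HC Φ f := h1.trans h2
      _ = Ekin f + Casimir Φ f + Epot ρ := h3
      _ ≤ (1+η) ^ ((5:ℝ)/3) * (∫ x, PsiOf Φ (ρ x)) + ε * M + Epot ρ := by
          linarith [hbound]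
  refine le_of_forall_pos_le_add (fun δ hδ => ?_)
  set A : ℝ := ∫ x, PsiOf Φ (ρ x) with hA
  have hA0 : 0 ≤ A := integral_nonneg fun x => psiOf_nonneg hΦ _
  set cδ : ℝ := 1 + δ / (2*(A+1)) with hcδ
  have hfrac : 0 < δ / (2*(A+1)) := by positivity
  have hc1 : 1 < cδ := by rw [hcδ]; linarith
  have hcδ0 : 0 ≤ cδ := by linarith
  set η : ℝ := cδ ^ ((3:ℝ)/5) - 1 with hηdef
  have hη0 : 0 < η := by
    rw [hηdef]
    have h1 : 1 < cδ ^ ((3:ℝ)/5) :=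
      (Real.one_lt_rpow_iff_of_pos (by linarith)).mpr (Or.inl ⟨hc1, by norm_num⟩)
    linarith
  have hpow : (1+η) ^ ((5:ℝ)/3) = cδ := by
    rw [hηdef]
    have h1 : (1:ℝ) + (cδ ^ ((3:ℝ)/5) - 1) = cδ ^ ((3:ℝ)/5) := by ring
    rw [h1, ← Real.rpow_mul hcδ0]
    norm_num
  have hε0 : (0:ℝ) < δ / (2*(M+1)) := by positivity
  have hk := key η hη0 (δ / (2*(M+1))) hε0
  rw [hpow] at hk
  have hHr : Hr (PsiOf Φ) ρ = A + Epot ρ := by simp only [Hr, hA]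
  rw [hHr]
  have e1 : cδ * A = A + (δ / (2*(A+1))) * A := by rw [hcδ]; ring
  have e2 : (δ / (2*(A+1))) * A ≤ δ/2 := by
    rw [div_mul_eq_mul_div, div_le_div_iff₀ (by positivity) two_pos]
    nlinarith
  have e3 : (δ / (2*(M+1))) * M ≤ δ/2 := by
    rw [div_mul_eq_mul_div, div_le_div_iff₀ (by positivity) two_pos]
    nlinarith
  linarith
end AuxVP3
end
end

section
/- Let Φ : [0,∞) → [0,∞) be continuous, convex, with Φ(0) = 0, and define Ψ(s) := inf{ ∫_{ℝ³} ((1/2)|v|² g(v) + Φ(g(v))) dv : g ∈ L¹₊(ℝ³), ∫ g dv = s } for s ≥ 0. Then the Legendre transforms satisfy, for every λ ∈ ℝ, the identity Ψ̄(λ) = ∫_{ℝ³} Φ̄(λ - (1/2)|v|²) dv, where for a function h : [0,∞) → ℝ the Legendre transform is h̄(λ) := sup_{r ≥ 0} (λ r - h(r)). -/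
open MeasureTheory Filter Topology Set ENNReal

noncomputable section

/-- Legendre transform `h̄(λ) = sup_{r ≥ 0} (λ r - h(r))`, valued in `ℝ≥0∞`
(it is nonnegative since `h(0) = 0`, and possibly `+∞`). -/
def legendre (h : ℝ → ℝ) (l : ℝ) : ℝ≥0∞ :=
  ⨆ r : Ici (0:ℝ), ENNReal.ofReal (l * (r : ℝ) - h (r : ℝ))

/-- enumeration of nonnegative rationals (with extras), starting at 0 -/
def qseq : ℕ → ℝ := fun n =>
  if n = 0 then 0 else |((Denumerable.ofNat ℚ (n-1) : ℚ) : ℝ)|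

lemma qseq_nonneg (n : ℕ) : 0 ≤ qseq n := by
  unfold qseq; split <;> simp [abs_nonneg]

lemma qseq_zero : qseq 0 = 0 := rfl

lemma qseq_surj (q : ℚ) (hq : 0 ≤ q) : ∃ n, qseq n = (q : ℝ) := by
  obtain ⟨m, hm⟩ : ∃ m, Denumerable.ofNat ℚ m = q := ⟨_, Denumerable.ofNat_encode q⟩
  refine ⟨m + 1, ?_⟩
  have h1 : m + 1 ≠ 0 := by omega
  rw [qseq, if_neg h1, Nat.add_sub_cancel, hm]
  exact abs_of_nonneg (by exact_mod_cast hq)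

def supN (Φ : ℝ → ℝ) (μ : ℝ) (N : ℕ) : ℝ :=
  (Finset.range (N+1)).sup' (by simp) (fun k => μ * qseq k - Φ (qseq k))

lemma supN_nonneg (Φ : ℝ → ℝ) (hzero : Φ 0 = 0) (μ : ℝ) (N : ℕ) : 0 ≤ supN Φ μ N := by
  have h0 : (0:ℕ) ∈ Finset.range (N+1) := by simp
  have h := Finset.le_sup' (fun k => μ * qseq k - Φ (qseq k)) h0
  calc (0:ℝ) = μ * qseq 0 - Φ (qseq 0) := by rw [qseq_zero, hzero]; ring
    _ ≤ _ := h

lemma supN_mono (Φ : ℝ → ℝ) (μ : ℝ) : Monotone (supN Φ μ) := by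
  intro a b hab
  exact Finset.sup'_mono _ (Finset.range_subset_range.2 (by omega)) (by simp)

lemma supN_le_legendre (Φ : ℝ → ℝ) (μ : ℝ) (N : ℕ) :
    ENNReal.ofReal (supN Φ μ N) ≤ legendre Φ μ := by
  obtain ⟨k, _, hk⟩ := Finset.exists_mem_eq_sup' (by simp : (Finset.range (N+1)).Nonempty)
    (fun k => μ * qseq k - Φ (qseq k))
  rw [supN, hk]
  exact le_iSup_of_le ⟨qseq k, qseq_nonneg k⟩ le_rfl

lemma le_legendre (Φ : ℝ → ℝ) (μ : ℝ) {r : ℝ} (hr : 0 ≤ r) :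
    ENNReal.ofReal (μ * r - Φ r) ≤ legendre Φ μ :=
  le_iSup_of_le ⟨r, hr⟩ le_rfl

/-- Lemma A: pointwise formula for the Legendre transform as a countable sup. -/
lemma legendre_eq_iSup_supN (Φ : ℝ → ℝ) (hcont : ContinuousOn Φ (Ici 0)) (μ : ℝ) :
    legendre Φ μ = ⨆ N : ℕ, ENNReal.ofReal (supN Φ μ N) := by
  apply le_antisymm
  · apply iSup_le
    rintro ⟨r, hr⟩
    apply ENNReal.le_of_forall_pos_le_add
    intro ε hε _
    have hεR : (0:ℝ) < (ε:ℝ) := hε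
    -- continuity of ψ s = μ*s - Φ s at r within Ici 0
    have hψ : ContinuousWithinAt (fun s => μ * s - Φ s) (Ici 0) r :=
      ((continuous_const.mul continuous_id).continuousWithinAt).sub (hcont r hr)
    have hev : ∀ᶠ s in 𝓝[Ici 0] r, (μ * r - Φ r) - (ε:ℝ) < μ * s - Φ s := by
      have : Iio (μ * r - Φ r + 1) ∈ 𝓝 (μ * r - Φ r) := Iio_mem_nhds (by linarith)
      have h2 : Ioi ((μ * r - Φ r) - (ε:ℝ)) ∈ 𝓝 (μ * r - Φ r) := Ioi_mem_nhds (by linarith)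
      exact hψ (h2)
    obtain ⟨δ, hδ, hball⟩ := Metric.mem_nhdsWithin_iff.1 hev
    obtain ⟨q, hq1, hq2⟩ := exists_rat_btwn (show r < r + δ by linarith)
    have hq0 : (0:ℝ) ≤ (q:ℝ) := le_of_lt (lt_of_le_of_lt hr hq1)
    obtain ⟨n, hn⟩ := qseq_surj q (by exact_mod_cast hq0)
    have hdist : dist (q:ℝ) r < δ := by
      rw [Real.dist_eq, abs_of_pos (by linarith)]; linarith
    have hval : (μ * r - Φ r) - (ε:ℝ) < μ * (q:ℝ) - Φ (q:ℝ) :=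
      hball ⟨Metric.mem_ball.2 hdist, hq0⟩
    have hle : μ * (q:ℝ) - Φ (q:ℝ) ≤ supN Φ μ n := by
      have hmem : n ∈ Finset.range (n+1) := by simp
      have := Finset.le_sup' (fun k => μ * qseq k - Φ (qseq k)) hmem
      rw [hn] at this; exact this
    calc ENNReal.ofReal (μ * r - Φ r)
        ≤ ENNReal.ofReal ((μ * (q:ℝ) - Φ (q:ℝ)) + (ε:ℝ)) := by
          apply ENNReal.ofReal_le_ofReal; linarith
      _ ≤ ENNReal.ofReal (μ * (q:ℝ) - Φ (q:ℝ)) + ENNReal.ofReal (ε:ℝ) :=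
          ENNReal.ofReal_add_le
      _ ≤ (⨆ N : ℕ, ENNReal.ofReal (supN Φ μ N)) + ε := by
          gcongr
          · exact le_iSup_of_le n (ENNReal.ofReal_le_ofReal hle)
          · simp [ENNReal.ofReal_coe_nnreal]
  · exact iSup_le fun N => supN_le_legendre Φ μ N

/-- Lemma B: measurable selection of the maximizer over a finite set. -/
lemma exists_measurable_selector (Φ : ℝ → ℝ) (μ : R3 → ℝ) (hμ : Measurable μ)
    (s : Finset ℕ) (hs : s.Nonempty) :
    ∃ g : R3 → ℝ, (∀ h : ℝ → ℝ, Measurable (fun v => h (g v))) ∧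
      (∀ v, ∃ k ∈ s, g v = qseq k) ∧
      (∀ v, μ v * g v - Φ (g v) = s.sup' hs (fun k => μ v * qseq k - Φ (qseq k))) := by
  induction hs using Finset.Nonempty.cons_induction with
  | singleton a =>
      exact ⟨fun _ => qseq a, fun h => measurable_const, fun v => ⟨a, by simp⟩,
        fun v => by simp⟩
  | cons a s ha hs ih =>
      obtain ⟨g, hgm, hgval, hgsup⟩ := ih
      set C : Set R3 := {v | μ v * g v - Φ (g v) ≤ μ v * qseq a - Φ (qseq a)} with hC
      have hCm : MeasurableSet C := by
        apply measurableSet_le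
        · exact (hμ.mul (hgm id)).sub (hgm Φ)
        · exact (hμ.mul measurable_const).sub measurable_const
      refine ⟨fun v => if v ∈ C then qseq a else g v, ?_, ?_, ?_⟩
      · intro h
        have : (fun v => h (if v ∈ C then qseq a else g v))
            = fun v => if v ∈ C then h (qseq a) else h (g v) := by
          ext v; split <;> rfl
        rw [this]
        exact Measurable.ite hCm measurable_const (hgm h)
      · intro v
        by_cases hv : v ∈ C
        · exact ⟨a, Finset.mem_cons_self a s, by simp [hv]⟩
        · obtain ⟨k, hk, hk2⟩ := hgval v
          exact ⟨k, Finset.mem_cons_of_mem hk, by simp [hv, hk2]⟩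
      · intro v
        rw [Finset.sup'_cons hs]
        by_cases hv : v ∈ C
        · simp only [hv, if_pos]
          have : s.sup' hs (fun k => μ v * qseq k - Φ (qseq k)) ≤ μ v * qseq a - Φ (qseq a) := by
            rw [← hgsup v]; exact hv
          simp [sup_eq_left.2 this]
        · simp only [hv, if_neg, not_false_iff]
          have hlt : μ v * qseq a - Φ (qseq a) ≤ μ v * g v - Φ (g v) := by
            by_contra hcon
            exact hv (le_of_lt (not_le.1 hcon))
          rw [hgsup v] at hlt ⊢
          simp [sup_eq_right.2 hlt]

lemma ofReal_max_zero (a : ℝ) : ENNReal.ofReal (max a 0) = ENNReal.ofReal a := by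
  rcases le_total a 0 with h | h
  · simp [max_eq_right h, ENNReal.ofReal_eq_zero.2 h]
  · simp [max_eq_left h]

lemma psiSet_bddBelow (Φ : ℝ → ℝ) (hnonneg : ∀ s ∈ Ici (0:ℝ), 0 ≤ Φ s) (s : ℝ) :
    BddBelow { r : ℝ | ∃ g : R3 → ℝ, (∀ v, 0 ≤ g v) ∧ Integrable g ∧ (∫ v, g v) = s ∧
      Integrable (fun v => (1/2) * ‖v‖ ^ 2 * g v + Φ (g v)) ∧
      r = ∫ v, ((1/2) * ‖v‖ ^ 2 * g v + Φ (g v)) } := by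
  refine ⟨0, ?_⟩
  rintro r ⟨g, hg0, -, -, -, rfl⟩
  apply integral_nonneg
  intro v
  have h1 := hnonneg (g v) (hg0 v)
  have h2 : 0 ≤ (1/2) * ‖v‖^2 * g v := mul_nonneg (by positivity) (hg0 v)
  exact add_nonneg h2 h1

lemma psiSet_nonempty (Φ : ℝ → ℝ) (hzero : Φ 0 = 0) {s : ℝ} (hs : 0 ≤ s) :
    Set.Nonempty { r : ℝ | ∃ g : R3 → ℝ, (∀ v, 0 ≤ g v) ∧ Integrable g ∧ (∫ v, g v) = s ∧
      Integrable (fun v => (1/2) * ‖v‖ ^ 2 * g v + Φ (g v)) ∧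
      r = ∫ v, ((1/2) * ‖v‖ ^ 2 * g v + Φ (g v)) } := by
  have hBm : MeasurableSet (Metric.closedBall (0:R3) 1) := measurableSet_closedBall
  set T := (volume (Metric.closedBall (0:R3) 1)).toReal with hT
  have hT0 : 0 < T := ENNReal.toReal_pos
    (Metric.measure_closedBall_pos volume 0 one_pos).ne' measure_closedBall_lt_top.ne
  set c := s / T with hc
  have hc0 : 0 ≤ c := div_nonneg hs hT0.le
  set g := (Metric.closedBall (0:R3) 1).indicator (fun _ => c) with hg
  have hg0 : ∀ v, 0 ≤ g v := by
    intro v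
    rw [hg]
    by_cases hv : v ∈ Metric.closedBall (0:R3) 1 <;>
      simp [Set.indicator, hv, hc0]
  have hgi : Integrable g :=
    (integrable_indicator_iff hBm).2 (integrableOn_const measure_closedBall_lt_top.ne)
  have hgint : (∫ v, g v) = s := by
    rw [hg, integral_indicator_const c hBm, smul_eq_mul, measureReal_def, ← hT, hc]
    field_simp
  have hE : (fun v : R3 => (1/2) * ‖v‖ ^ 2 * g v + Φ (g v))
      = (Metric.closedBall (0:R3) 1).indicator (fun v => (1/2) * ‖v‖ ^ 2 * c + Φ c) := by
    funext v
    by_cases hv : v ∈ Metric.closedBall (0:R3) 1 <;>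
      simp [hg, Set.indicator, hv, hzero]
  have hEi : Integrable (fun v : R3 => (1/2) * ‖v‖ ^ 2 * g v + Φ (g v)) := by
    rw [hE]
    refine (integrable_indicator_iff hBm).2 ?_
    exact ContinuousOn.integrableOn_compact (isCompact_closedBall _ _)
      (Continuous.continuousOn (by continuity))
  exact ⟨_, g, hg0, hgi, hgint, hEi, rfl⟩

lemma psiOf_le_s9 (Φ : ℝ → ℝ) (hnonneg : ∀ s ∈ Ici (0:ℝ), 0 ≤ Φ s) {s : ℝ} {g : R3 → ℝ}
    (hg0 : ∀ v, 0 ≤ g v) (hgi : Integrable g) (hgs : (∫ v, g v) = s)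
    (hEi : Integrable (fun v => (1/2) * ‖v‖ ^ 2 * g v + Φ (g v))) :
    PsiOf Φ s ≤ ∫ v, ((1/2) * ‖v‖ ^ 2 * g v + Φ (g v)) :=
  csInf_le (psiSet_bddBelow Φ hnonneg s) ⟨g, hg0, hgi, hgs, hEi, rfl⟩

lemma psiOf_exists (Φ : ℝ → ℝ) (hzero : Φ 0 = 0) {s : ℝ} (hs : 0 ≤ s) {ε : ℝ} (hε : 0 < ε) :
    ∃ g : R3 → ℝ, (∀ v, 0 ≤ g v) ∧ Integrable g ∧ (∫ v, g v) = s ∧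
      Integrable (fun v => (1/2) * ‖v‖ ^ 2 * g v + Φ (g v)) ∧
      (∫ v, ((1/2) * ‖v‖ ^ 2 * g v + Φ (g v))) < PsiOf Φ s + ε := by
  obtain ⟨e, he, helt⟩ := Real.lt_sInf_add_pos (psiSet_nonempty Φ hzero hs) hε
  obtain ⟨g, hg0, hgi, hgs, hEi, rfl⟩ := he
  refine ⟨g, hg0, hgi, hgs, hEi, ?_⟩
  rw [PsiOf]
  exact helt

/-- the Legendre transforms of `Φ` and of the reduced function `Ψ`
satisfy `Ψ̄(λ) = ∫ Φ̄(λ - (1/2)|v|²) dv`. -/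
theorem legendre_reduction
    (Φ : ℝ → ℝ) (hcont : ContinuousOn Φ (Ici 0)) (hconv : ConvexOn ℝ (Ici 0) Φ)
    (hzero : Φ 0 = 0) (hnonneg : ∀ s ∈ Ici (0:ℝ), 0 ≤ Φ s) :
    ∀ l : ℝ, legendre (PsiOf Φ) l = ∫⁻ v : R3, legendre Φ (l - (1/2) * ‖v‖ ^ 2) := by
  intro l
  have hμm : Measurable (fun v : R3 => l - (1/2) * ‖v‖ ^ 2) :=
    measurable_const.sub (continuous_const.mul ((continuous_norm).pow 2)).measurable
  apply le_antisymm
  · -- easy direction: `legendre (PsiOf Φ) l ≤ ∫⁻ ...`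
    rw [legendre]
    apply iSup_le
    rintro ⟨s, hs⟩
    show ENNReal.ofReal (l * s - PsiOf Φ s) ≤ _
    apply ENNReal.le_of_forall_pos_le_add
    intro ε hε _
    have hεR : (0:ℝ) < (ε:ℝ) := hε
    obtain ⟨g, hg0, hgi, hgs, hEi, hlt⟩ := psiOf_exists Φ hzero hs hεR
    set f := fun v : R3 => l * g v - ((1/2) * ‖v‖ ^ 2 * g v + Φ (g v)) with hf
    have hfi : Integrable f := (hgi.const_mul l).sub hEi
    have hint : (∫ v, f v) = l * s - ∫ v, ((1/2) * ‖v‖ ^ 2 * g v + Φ (g v)) := by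
      rw [hf, integral_sub (hgi.const_mul l) hEi, integral_const_mul, hgs]
    have key : ENNReal.ofReal (∫ v, f v) ≤ ∫⁻ v : R3, legendre Φ (l - (1/2) * ‖v‖ ^ 2) := by
      calc ENNReal.ofReal (∫ v, f v)
          ≤ ENNReal.ofReal (∫ v, (f v ⊔ 0)) := by
            apply ENNReal.ofReal_le_ofReal
            exact integral_mono hfi hfi.pos_part (fun v => le_sup_left)
        _ = ∫⁻ v, ENNReal.ofReal (f v ⊔ 0) :=
            ofReal_integral_eq_lintegral_ofReal hfi.pos_part
              (Eventually.of_forall fun v => le_sup_right)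
        _ = ∫⁻ v, ENNReal.ofReal (f v) := by
            apply lintegral_congr
            intro v
            exact ofReal_max_zero (f v)
        _ ≤ ∫⁻ v : R3, legendre Φ (l - (1/2) * ‖v‖ ^ 2) := by
            apply lintegral_mono
            intro v
            have hfv : f v = (l - (1/2) * ‖v‖ ^ 2) * g v - Φ (g v) := by rw [hf]; ring
            dsimp only
            rw [hfv]
            exact le_legendre Φ _ (hg0 v)
    calc ENNReal.ofReal (l * s - PsiOf Φ s)
        ≤ ENNReal.ofReal ((∫ v, f v) + (ε:ℝ)) := by
          apply ENNReal.ofReal_le_ofReal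
          rw [hint]; linarith
      _ ≤ ENNReal.ofReal (∫ v, f v) + ENNReal.ofReal (ε:ℝ) := ENNReal.ofReal_add_le
      _ ≤ (∫⁻ v : R3, legendre Φ (l - (1/2) * ‖v‖ ^ 2)) + (ε:ℝ≥0∞) := by
          exact add_le_add key (by simp)
  · -- hard direction: `∫⁻ ... ≤ legendre (PsiOf Φ) l`
    set μf := fun v : R3 => l - (1/2) * ‖v‖ ^ 2 with hμf
    set F : ℕ → R3 → ℝ≥0∞ := fun N =>
      (Metric.closedBall (0:R3) (N:ℝ)).indicator
        (fun v => ENNReal.ofReal (supN Φ (μf v) N)) with hF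
    have hFle : ∀ N v, F N v ≤ ENNReal.ofReal (supN Φ (μf v) N) := by
      intro N v
      simp only [hF]
      by_cases hv : v ∈ Metric.closedBall (0:R3) (N:ℝ)
      · rw [Set.indicator_of_mem hv]
      · rw [Set.indicator_of_notMem hv]; exact zero_le
    have hpt : ∀ v, (⨆ N, F N v) = legendre Φ (μf v) := by
      intro v
      rw [legendre_eq_iSup_supN Φ hcont]
      apply le_antisymm
      · exact iSup_le fun N => (hFle N v).trans (le_iSup_of_le N le_rfl)
      · apply iSup_le
        intro N
        have hvM : v ∈ Metric.closedBall (0:R3) ((max N ⌈‖v‖⌉₊ : ℕ) : ℝ) := by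
          rw [Metric.mem_closedBall, dist_zero_right]
          calc ‖v‖ ≤ (⌈‖v‖⌉₊ : ℝ) := Nat.le_ceil _
            _ ≤ ((max N ⌈‖v‖⌉₊ : ℕ) : ℝ) := by exact_mod_cast Nat.le_max_right N ⌈‖v‖⌉₊
        refine le_iSup_of_le (max N ⌈‖v‖⌉₊) ?_
        simp only [hF]
        simp only [Set.indicator_of_mem hvM]
        exact ENNReal.ofReal_le_ofReal (supN_mono Φ (μf v) (Nat.le_max_left _ _))
    have hFmono : Monotone F := by
      intro a b hab v
      by_cases hv : v ∈ Metric.closedBall (0:R3) (a:ℝ)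
      · have hv' : v ∈ Metric.closedBall (0:R3) (b:ℝ) :=
          Metric.closedBall_subset_closedBall (by exact_mod_cast hab) hv
        simp only [hF]
        simp only [Set.indicator_of_mem hv, Set.indicator_of_mem hv']
        exact ENNReal.ofReal_le_ofReal (supN_mono Φ (μf v) hab)
      · simp only [hF]
        simp only [Set.indicator_of_notMem hv]
        exact zero_le
    have hFmeas : ∀ N, Measurable (F N) := by
      intro N
      apply Measurable.indicator ?_ measurableSet_closedBall
      apply ENNReal.measurable_ofReal.comp
      have hrw : (fun v : R3 => supN Φ (μf v) N)
          = (Finset.range (N+1)).sup' (by simp) (fun k => fun v : R3 => μf v * qseq k - Φ (qseq k)) := by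
        funext v
        rw [supN, Finset.sup'_apply]
      rw [hrw]
      exact Finset.measurable_sup' (by simp)
        (fun n _ => (hμm.mul measurable_const).sub measurable_const)
    calc ∫⁻ v : R3, legendre Φ (l - (1/2) * ‖v‖ ^ 2)
        = ∫⁻ v : R3, ⨆ N, F N v := lintegral_congr fun v => (hpt v).symm
      _ = ⨆ N, ∫⁻ v : R3, F N v := lintegral_iSup hFmeas hFmono
      _ ≤ legendre (PsiOf Φ) l := by
          apply iSup_le
          intro N
          obtain ⟨g₀, hg₀m, hg₀val, hg₀sup⟩ :=
            exists_measurable_selector Φ μf hμm (Finset.range (N+1)) (by simp)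
          set B := Metric.closedBall (0:R3) (N:ℝ) with hB
          have hBm : MeasurableSet B := measurableSet_closedBall
          set g : R3 → ℝ := B.indicator g₀ with hg
          have hgB : ∀ v ∈ B, g v = g₀ v := by
            intro v hv; rw [hg]; exact Set.indicator_of_mem hv g₀
          have hgO : ∀ v ∉ B, g v = 0 := by
            intro v hv; rw [hg]; exact Set.indicator_of_notMem hv g₀
          have hg0 : ∀ v, 0 ≤ g v := by
            intro v
            by_cases hv : v ∈ B
            · obtain ⟨k, -, hk⟩ := hg₀val v
              rw [hgB v hv, hk]; exact qseq_nonneg k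
            · rw [hgO v hv]
          have hgm : ∀ h : ℝ → ℝ, Measurable (fun v => h (g v)) := by
            intro h
            have hrw : (fun v => h (g v))
                = fun v => B.indicator (fun w => h (g₀ w) - h 0) v + h 0 := by
              funext v
              by_cases hv : v ∈ B
              · rw [Set.indicator_of_mem hv, hgB v hv]; ring
              · rw [Set.indicator_of_notMem hv, hgO v hv]; ring
            rw [hrw]
            exact (((hg₀m h).sub measurable_const).indicator hBm).add measurable_const
          set Q := (Finset.range (N+1)).sup' (by simp) qseq with hQ
          have hgQ : ∀ v, |g v| ≤ Q := by
            intro v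
            by_cases hv : v ∈ B
            · obtain ⟨k, hk, hk2⟩ := hg₀val v
              rw [hgB v hv, hk2, abs_of_nonneg (qseq_nonneg k)]
              exact Finset.le_sup' qseq hk
            · rw [hgO v hv, abs_zero]
              calc (0:ℝ) = qseq 0 := qseq_zero.symm
                _ ≤ Q := Finset.le_sup' qseq (by simp)
          have hbQi : Integrable (B.indicator (fun _ => Q)) :=
            (integrable_indicator_iff hBm).2
              (integrableOn_const measure_closedBall_lt_top.ne)
          have hgi : Integrable g := by
            apply Integrable.mono' hbQi (hgm id).aestronglyMeasurable
            apply Eventually.of_forall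
            intro v
            simp only [id_eq]
            by_cases hv : v ∈ B
            · rw [Set.indicator_of_mem hv, Real.norm_eq_abs]; exact hgQ v
            · rw [Set.indicator_of_notMem hv, Real.norm_eq_abs, hgO v hv, abs_zero]
          set CP := (Finset.range (N+1)).sup' (by simp) (fun k => |Φ (qseq k)|) with hCP
          have hEmeas : Measurable (fun v : R3 => (1/2) * ‖v‖ ^ 2 * g v + Φ (g v)) :=
            (((continuous_const.mul ((continuous_norm).pow 2)).measurable).mul (hgm id)).add (hgm Φ)
          have hEout : ∀ v ∉ B, (1/2) * ‖v‖ ^ 2 * g v + Φ (g v) = 0 := by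
            intro v hv; rw [hgO v hv, hzero]; ring
          have hEi : Integrable (fun v : R3 => (1/2) * ‖v‖ ^ 2 * g v + Φ (g v)) := by
            have hEbi : Integrable (B.indicator (fun _ : R3 => (1/2) * (N:ℝ)^2 * Q + CP)) :=
              (integrable_indicator_iff hBm).2
                (integrableOn_const measure_closedBall_lt_top.ne)
            apply Integrable.mono' hEbi hEmeas.aestronglyMeasurable
            apply Eventually.of_forall
            intro v
            by_cases hv : v ∈ B
            · rw [Set.indicator_of_mem hv, Real.norm_eq_abs]
              have hvN : ‖v‖ ≤ (N:ℝ) := by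
                rw [hB, Metric.mem_closedBall, dist_zero_right] at hv; exact hv
              have h1 : |(1/2) * ‖v‖ ^ 2 * g v| ≤ (1/2) * (N:ℝ)^2 * Q := by
                rw [abs_mul, abs_of_nonneg (show (0:ℝ) ≤ (1/2) * ‖v‖ ^ 2 by positivity)]
                have hQ0 : 0 ≤ Q := (abs_nonneg _).trans (hgQ v)
                apply mul_le_mul _ (hgQ v) (abs_nonneg _) (by positivity)
                have : ‖v‖ ^ 2 ≤ (N:ℝ)^2 := by
                  apply pow_le_pow_left₀ (norm_nonneg v) hvN
                linarith
              have h2 : |Φ (g v)| ≤ CP := by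
                obtain ⟨k, hk, hk2⟩ := hg₀val v
                rw [hgB v hv, hk2]
                exact Finset.le_sup' (fun k => |Φ (qseq k)|) hk
              calc |(1/2) * ‖v‖ ^ 2 * g v + Φ (g v)|
                  ≤ |(1/2) * ‖v‖ ^ 2 * g v| + |Φ (g v)| := abs_add_le _ _
                _ ≤ (1/2) * (N:ℝ)^2 * Q + CP := add_le_add h1 h2
            · rw [Set.indicator_of_notMem hv, Real.norm_eq_abs, hEout v hv, abs_zero]
          have hs : 0 ≤ ∫ v, g v := integral_nonneg hg0
          have hPsile : PsiOf Φ (∫ v, g v) ≤ ∫ v, ((1/2) * ‖v‖ ^ 2 * g v + Φ (g v)) :=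
            psiOf_le_s9 Φ hnonneg hg0 hgi rfl hEi
          set f := fun v : R3 => μf v * g v - Φ (g v) with hf
          have hfeq : f = fun v : R3 => l * g v - ((1/2) * ‖v‖ ^ 2 * g v + Φ (g v)) := by
            funext v; rw [hf, hμf]; ring
          have hfi : Integrable f := by
            rw [hfeq]; exact (hgi.const_mul l).sub hEi
          have hfptB : ∀ v ∈ B, f v = supN Φ (μf v) N := by
            intro v hv
            rw [hf]
            show μf v * g v - Φ (g v) = _
            rw [hgB v hv, hg₀sup v, supN]
          have hfptO : ∀ v ∉ B, f v = 0 := by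
            intro v hv
            rw [hf]
            show μf v * g v - Φ (g v) = 0
            rw [hgO v hv, hzero]; ring
          have hf0 : ∀ v, 0 ≤ f v := by
            intro v
            by_cases hv : v ∈ B
            · rw [hfptB v hv]; exact supN_nonneg Φ hzero _ N
            · rw [hfptO v hv]
          have hFf : ∀ v, F N v = ENNReal.ofReal (f v) := by
            intro v
            by_cases hv : v ∈ B
            · simp only [hF]
              simp only [Set.indicator_of_mem (hB ▸ hv : v ∈ Metric.closedBall (0:R3) (N:ℝ))]
              rw [hfptB v hv]
            · simp only [hF]
              simp only [Set.indicator_of_notMem (hB ▸ hv : v ∉ Metric.closedBall (0:R3) (N:ℝ))]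
              rw [hfptO v hv, ENNReal.ofReal_zero]
          have hint : (∫ v, f v) = l * (∫ v, g v) - ∫ v, ((1/2) * ‖v‖ ^ 2 * g v + Φ (g v)) := by
            rw [hfeq, integral_sub (hgi.const_mul l) hEi, integral_const_mul]
          calc ∫⁻ v : R3, F N v
              = ∫⁻ v : R3, ENNReal.ofReal (f v) := lintegral_congr hFf
            _ = ENNReal.ofReal (∫ v, f v) :=
                (ofReal_integral_eq_lintegral_ofReal hfi (Eventually.of_forall hf0)).symm
            _ ≤ ENNReal.ofReal (l * (∫ v, g v) - PsiOf Φ (∫ v, g v)) := by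
                apply ENNReal.ofReal_le_ofReal
                rw [hint]; linarith
            _ ≤ legendre (PsiOf Φ) l := le_iSup_of_le ⟨∫ v, g v, hs⟩ le_rfl
end
end
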